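/- Let F be a field, n ≥ 1, A an n×n matrix over F, v ∈ F^n a column vector, φ ∈ (F^n)^* a row vector, and λ ∈ F. Then for every integer k ≥ 1, c_k(A + λ·v⊗φ) = c_k(A) + λ · Σ_{j=0}^{k-1} (−1)^j c_{k−1−j}(A) · (φ A^j v); in particular, for each k the function λ ↦ c_k(A + λ·v⊗φ) is affine-linear in λ. -/

import Mathlib

open Matrix

/-- `principalMinorSum B k` is `c_k(B)`: the sum of all `k × k` principal minors
of the square matrix `B`. -/
noncomputable def principalMinorSum {F : Type*} [Field F] {n : ℕ}
    (B : Matrix (Fin n) (Fin n) F) (k : ℕ) : F :=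
  ∑ s ∈ Finset.powersetCard k (Finset.univ : Finset (Fin n)),
    (B.submatrix (fun i : {x // x ∈ s} => (i : Fin n))
      (fun i : {x // x ∈ s} => (i : Fin n))).det

section Aux

open Polynomial Finset

variable {R : Type*} [CommRing R] {m : Type*} [DecidableEq m] [Fintype m]

lemma sum_card_le_one (g : Finset m → R) (h2 : ∀ s : Finset m, 2 ≤ s.card → g s = 0) :
    ∑ s : Finset m, g s = g ∅ + ∑ i : m, g {i} := by
  have hfil : (Finset.univ : Finset (Finset m)) ⊇
      (Finset.univ.filter fun s : Finset m => s.card ≤ 1) := Finset.filter_subset _ _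
  rw [← Finset.sum_subset hfil (fun s _ hs => h2 s (by
    simp only [Finset.mem_filter, Finset.mem_univ, true_and, not_le] at hs; omega))]
  have : (Finset.univ.filter fun s : Finset m => s.card ≤ 1) =
      insert ∅ (Finset.univ.image fun i : m => ({i} : Finset m)) := by
    ext s
    simp only [Finset.mem_filter, Finset.mem_univ, true_and, Finset.mem_insert, Finset.mem_image]
    constructor
    · intro h
      interval_cases h' : s.card
      · exact Or.inl (Finset.card_eq_zero.mp h')
      · obtain ⟨a, ha⟩ := Finset.card_eq_one.mp h'
        exact Or.inr ⟨a, ha.symm⟩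
    · rintro (rfl | ⟨a, -, rfl⟩) <;> simp
  rw [this, Finset.sum_insert (by simp), Finset.sum_image (fun a _ b _ h => by simpa using h)]

lemma det_add_vecMulVec' (M : Matrix m m R) (u w : m → R) :
    (M + vecMulVec u w).det = M.det + ∑ i : m, u i * (M.updateRow i w).det := by
  classical
  have key : (M + vecMulVec u w).det =
      ∑ s : Finset m, (detRowAlternating (s.piecewise (fun i => u i • w) M) : R) := by
    have h := (detRowAlternating : (m → R) [⋀^m]→ₗ[R] R).toMultilinearMap.map_add_univ
      (fun i => u i • w) M
    have hM : (M + vecMulVec u w) = ((fun i => u i • w) + fun i => M i) := by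
      funext i j
      simp [vecMulVec_apply, add_comm, Pi.smul_apply, smul_eq_mul]
    rw [show (M + vecMulVec u w).det = detRowAlternating (M + vecMulVec u w) from rfl, hM]
    exact h
  have term : ∀ s : Finset m, (detRowAlternating (s.piecewise (fun i => u i • w) M) : R) =
      (∏ i ∈ s, u i) * detRowAlternating (s.piecewise (fun _ => w) M) := by
    intro s
    have : s.piecewise (fun i => u i • w) M
        = s.piecewise (fun i => u i • (s.piecewise (fun _ => w) M) i)
            (s.piecewise (fun _ => w) M) := by
      funext i
      by_cases hi : i ∈ s <;>
        simp [Finset.piecewise_eq_of_mem _ _ _ , hi, Finset.piecewise]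
    rw [this]
    exact ((detRowAlternating : (m → R) [⋀^m]→ₗ[R] R).toMultilinearMap.map_piecewise_smul
      u (s.piecewise (fun _ => w) M) s).trans (smul_eq_mul _ _)
  rw [key]
  rw [Finset.sum_congr rfl fun s _ => term s]
  have h2 : ∀ s : Finset m, 2 ≤ s.card →
      (∏ i ∈ s, u i) * (detRowAlternating (s.piecewise (fun _ => w) M) : R) = 0 := by
    intro s hs
    obtain ⟨a, ha, b, hb, hab⟩ := Finset.one_lt_card.mp hs
    have : (detRowAlternating (s.piecewise (fun _ => w) M) : R) = 0 := by
      apply (detRowAlternating : (m → R) [⋀^m]→ₗ[R] R).map_eq_zero_of_eq _ _ hab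
      simp [Finset.piecewise, ha, hb]
    rw [this, mul_zero]
  rw [sum_card_le_one _ h2]
  congr 1
  · simp only [Finset.piecewise_empty, Finset.prod_empty, one_mul]
    exact congrArg (fun f : m → m → R => (detRowAlternating f : R)) (Finset.piecewise_empty (fun _ => w) M)
  · refine Finset.sum_congr rfl fun i _ => ?_
    rw [Finset.prod_singleton]
    exact congrArg (fun f : m → m → R => u i * (detRowAlternating f : R)) (Finset.piecewise_singleton _ _ _)

lemma det_piecewise_one (B : Matrix m m R) (s : Finset m) :
    (detRowAlternating (s.piecewise (fun i => B i) (fun i => (1 : Matrix m m R) i)) : R) =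
      (B.submatrix (fun i : {x // x ∈ s} => (i : m)) (fun i : {x // x ∈ s} => (i : m))).det := by
  classical
  set G : Matrix m m R := Matrix.of (s.piecewise (fun i => B i) (fun i => (1 : Matrix m m R) i))
    with hG
  have h1 : (detRowAlternating (s.piecewise (fun i => B i) (fun i => (1 : Matrix m m R) i)) : R)
      = G.det := rfl
  rw [h1]
  rw [← det_submatrix_equiv_self (Equiv.sumCompl (· ∈ s)) G]
  have hblocks : G.submatrix (Equiv.sumCompl (· ∈ s)) (Equiv.sumCompl (· ∈ s)) =
      fromBlocks
        (B.submatrix (fun i : {x // x ∈ s} => (i : m)) (fun i : {x // x ∈ s} => (i : m)))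
        (B.submatrix (fun i : {x // x ∈ s} => (i : m)) (fun i : {x // ¬ x ∈ s} => (i : m)))
        0 1 := by
    ext i j
    cases i with
    | inl a =>
      cases j with
      | inl b => simp [hG, Finset.piecewise_eq_of_mem _ _ _ a.2, fromBlocks]
      | inr b => simp [hG, Finset.piecewise_eq_of_mem _ _ _ a.2, fromBlocks]
    | inr a =>
      cases j with
      | inl b =>
        have hne : (a : m) ≠ (b : m) := fun h => a.2 (h ▸ b.2)
        simp [hG, Finset.piecewise_eq_of_notMem _ _ _ a.2, fromBlocks, one_apply, hne]
      | inr b =>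
        simp [hG, Finset.piecewise_eq_of_notMem _ _ _ a.2, fromBlocks, one_apply,
          Subtype.ext_iff]
  rw [hblocks, det_fromBlocks_zero₂₁, det_one, mul_one]

lemma coeff_det_one_add_X_smul_eq {F : Type*} [Field F] {n : ℕ}
    (B : Matrix (Fin n) (Fin n) F) (k : ℕ) :
    ((1 + (X : F[X]) • B.map (C : F →+* F[X])).det).coeff k = principalMinorSum B k := by
  classical
  set B' : Matrix (Fin n) (Fin n) F[X] := B.map (C : F →+* F[X]) with hB'
  have expand : (1 + (X : F[X]) • B').det =
      ∑ s : Finset (Fin n), X ^ s.card *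
        C ((B.submatrix (fun i : {x // x ∈ s} => (i : Fin n))
            (fun i : {x // x ∈ s} => (i : Fin n))).det) := by
    have hM : (1 + (X : F[X]) • B') = ((fun i => ((X : F[X]) • B') i) +
        fun i => (1 : Matrix (Fin n) (Fin n) F[X]) i) := by
      funext i j
      simp [add_comm]
    have h := (detRowAlternating :
        (Fin n → F[X]) [⋀^Fin n]→ₗ[F[X]] F[X]).toMultilinearMap.map_add_univ
      (fun i => ((X : F[X]) • B') i) (fun i => (1 : Matrix (Fin n) (Fin n) F[X]) i)
    refine Eq.trans (congrArg Matrix.det hM) ?_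
    refine Eq.trans h ?_
    refine Finset.sum_congr rfl fun s _ => ?_
    have hpw : s.piecewise (fun i => ((X : F[X]) • B') i)
          (fun i => (1 : Matrix (Fin n) (Fin n) F[X]) i)
        = s.piecewise (fun i => (X : F[X]) •
            (s.piecewise (fun i => B' i) (fun i => (1 : Matrix (Fin n) (Fin n) F[X]) i)) i)
            (s.piecewise (fun i => B' i) (fun i => (1 : Matrix (Fin n) (Fin n) F[X]) i)) := by
      funext i j
      by_cases hi : i ∈ s <;>
        simp [Finset.piecewise, hi, Matrix.smul_apply, Pi.smul_apply]
    rw [hpw]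
    have h2 := (detRowAlternating :
        (Fin n → F[X]) [⋀^Fin n]→ₗ[F[X]] F[X]).toMultilinearMap.map_piecewise_smul
      (fun _ => (X : F[X]))
      (s.piecewise (fun i => B' i) (fun i => (1 : Matrix (Fin n) (Fin n) F[X]) i)) s
    rw [Finset.prod_const, smul_eq_mul] at h2
    refine Eq.trans h2 ?_
    refine congrArg (fun t => (X : F[X]) ^ s.card * t) ?_
    refine Eq.trans (det_piecewise_one B' s) ?_
    rw [hB', Matrix.submatrix_map]
    exact (RingHom.map_det (C : F →+* F[X]) _).symm
  rw [expand, Polynomial.finset_sum_coeff]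
  have : ∀ s : Finset (Fin n),
      ((X : F[X]) ^ s.card * C ((B.submatrix (fun i : {x // x ∈ s} => (i : Fin n))
          (fun i : {x // x ∈ s} => (i : Fin n))).det)).coeff k =
      if s.card = k then ((B.submatrix (fun i : {x // x ∈ s} => (i : Fin n))
          (fun i : {x // x ∈ s} => (i : Fin n))).det) else 0 := by
    intro s
    rw [mul_comm, Polynomial.coeff_C_mul, Polynomial.coeff_X_pow, mul_ite, mul_one, mul_zero]
    simp only [eq_comm]
  rw [Finset.sum_congr rfl fun s _ => this s, ← Finset.sum_filter]
  rw [principalMinorSum]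
  congr 1
  ext s
  simp [Finset.mem_powersetCard_univ]

end Aux

open Polynomial

theorem stmt1 {F : Type*} [Field F] {n : ℕ} (hn : 1 ≤ n)
    (A : Matrix (Fin n) (Fin n) F) (v φ : Fin n → F) (lam : F) (k : ℕ) (hk : 1 ≤ k) :
    principalMinorSum (A + lam • Matrix.vecMulVec v φ) k =
      principalMinorSum A k +
        lam * ∑ j ∈ Finset.range k,
          (-1 : F) ^ j * principalMinorSum A (k - 1 - j) * (φ ⬝ᵥ ((A ^ j) *ᵥ v)) := by
  classical
  obtain ⟨k, rfl⟩ : ∃ k', k = k' + 1 := ⟨k - 1, (Nat.succ_pred_eq_of_pos hk).symm⟩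
  set A' : Matrix (Fin n) (Fin n) F[X] := A.map (C : F →+* F[X]) with hA'
  set M : Matrix (Fin n) (Fin n) F[X] := 1 + (X : F[X]) • A' with hMdef
  set φ' : Fin n → F[X] := fun i => C (φ i) with hφ'
  set v' : Fin n → F[X] := fun i => C (v i) with hv'
  set p : Matrix (Fin n) (Fin n) F[X] → F[X] := fun T => φ' ⬝ᵥ T *ᵥ v' with hp
  -- the rank-one decomposition of the perturbed matrix
  have hmat : (1 : Matrix (Fin n) (Fin n) F[X]) +
      (X : F[X]) • (A + lam • vecMulVec v φ).map (C : F →+* F[X])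
      = M + vecMulVec (fun i => (X : F[X]) * C (lam * v i)) φ' := by
    ext i j
    simp only [hMdef, hA', hφ', Matrix.add_apply, Matrix.smul_apply, Matrix.map_apply,
      vecMulVec_apply, smul_eq_mul, Pi.smul_apply, map_add, _root_.map_mul]
    ring_nf
  have hdet := det_add_vecMulVec' M (fun i => (X : F[X]) * C (lam * v i)) φ'
  -- the sum of updateRow determinants is the adjugate pairing
  have hupd : ∀ i, (M.updateRow i φ').det = ((M.adjugate)ᵀ *ᵥ φ') i := by
    intro i
    rw [← det_transpose, ← updateCol_transpose, ← cramer_apply, cramer_eq_adjugate_mulVec,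
      adjugate_transpose]
  have hsum : (∑ i, ((X : F[X]) * C (lam * v i)) * (M.updateRow i φ').det)
      = C lam * ((X : F[X]) * p M.adjugate) := by
    simp only [hupd, hp, mulVec, dotProduct, transpose_apply, Finset.mul_sum]
    rw [Finset.sum_comm]
    refine Finset.sum_congr rfl fun j _ => Finset.sum_congr rfl fun i _ => ?_
    simp only [_root_.map_mul, hv']
    ring_nf
  -- additivity data for p
  have hp_add : ∀ T U, p (T + U) = p T + p U := by
    intro T U
    simp [hp, add_mulVec, dotProduct_add]
  have hp_smul : ∀ (c : F[X]) T, p (c • T) = c * p T := by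
    intro c T
    simp [hp, smul_mulVec, dotProduct_smul, smul_eq_mul]
  -- the adjugate decomposition
  set N : Matrix (Fin n) (Fin n) F[X] := (-(X : F[X])) • A' with hN
  set S : Matrix (Fin n) (Fin n) F[X] := ∑ j ∈ Finset.range (k + 1), N ^ j with hS
  have hMN : M = 1 - N := by
    rw [hMdef, hN, neg_smul, sub_neg_eq_add]
  have hSM : S * M = 1 - N ^ (k + 1) := by
    have hg := geom_sum_mul N (k + 1)
    rw [hMN, Matrix.mul_sub, Matrix.mul_one]
    have h1 : S * N - S = N ^ (k + 1) - 1 := by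
      rw [← hg, Matrix.mul_sub, Matrix.mul_one, ← hS]
    have := congrArg Neg.neg h1
    simpa [neg_sub] using this
  have hadj : M.adjugate = M.det • S + N ^ (k + 1) * M.adjugate := by
    have h1 : S * (M * M.adjugate) = M.det • S := by
      rw [Matrix.mul_adjugate, Matrix.mul_smul, Matrix.mul_one]
    have h2 : S * (M * M.adjugate) = M.adjugate - N ^ (k + 1) * M.adjugate := by
      rw [← Matrix.mul_assoc, hSM, Matrix.sub_mul, Matrix.one_mul]
    exact sub_eq_iff_eq_add.mp (h1.symm.trans h2).symm
  -- power computations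
  have hA'pow : ∀ j : ℕ, A' ^ j = (A ^ j).map (C : F →+* F[X]) := by
    intro j
    rw [hA']
    exact (map_pow (RingHom.mapMatrix (C : F →+* F[X])) A j).symm
  have hppow : ∀ j : ℕ, p ((A ^ j).map (C : F →+* F[X])) = C (φ ⬝ᵥ (A ^ j) *ᵥ v) := by
    intro j
    simp [hp, hφ', hv', dotProduct, mulVec, map_sum, _root_.map_mul]
  -- p of the adjugate
  have hpS : p S = ∑ j ∈ Finset.range (k + 1),
      (-(X : F[X])) ^ j * C (φ ⬝ᵥ (A ^ j) *ᵥ v) := by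
    have hmap : p S = ∑ j ∈ Finset.range (k + 1), p (N ^ j) := by
      rw [hS]
      exact map_sum (AddMonoidHom.mk' p hp_add) _ _
    rw [hmap]
    refine Finset.sum_congr rfl fun j _ => ?_
    rw [hN, _root_.smul_pow, hp_smul, hA'pow, hppow]
  have hpadj : p M.adjugate = M.det * p S + p (N ^ (k + 1) * M.adjugate) := by
    conv_lhs => rw [hadj]
    rw [hp_add, hp_smul]
  have hvanish : (p (N ^ (k + 1) * M.adjugate)).coeff k = 0 := by
    have h1 : N ^ (k + 1) * M.adjugate
        = ((-(X : F[X])) ^ (k + 1)) • (A' ^ (k + 1) * M.adjugate) := by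
      rw [hN, _root_.smul_pow, smul_mul_assoc]
    rw [h1, hp_smul]
    have h2 : (-(X : F[X])) ^ (k + 1) * p (A' ^ (k + 1) * M.adjugate)
        = (p (A' ^ (k + 1) * M.adjugate) * (-1 : F[X]) ^ (k + 1)) * X ^ (k + 1) := by
      ring_nf
    rw [h2, Polynomial.coeff_mul_X_pow']
    simp
  have hdetM : ∀ d : ℕ, (M.det).coeff d = principalMinorSum A d := by
    intro d
    rw [hMdef, hA']
    exact coeff_det_one_add_X_smul_eq A d
  have hcoef : (M.det * p S).coeff k = ∑ j ∈ Finset.range (k + 1),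
      (-1 : F) ^ j * principalMinorSum A (k + 1 - 1 - j) * (φ ⬝ᵥ (A ^ j) *ᵥ v) := by
    rw [hpS, Finset.mul_sum, Polynomial.finset_sum_coeff]
    refine Finset.sum_congr rfl fun j hj => ?_
    have hj' : j ≤ k := by
      have := Finset.mem_range.mp hj
      omega
    have h3 : M.det * ((-(X : F[X])) ^ j * C (φ ⬝ᵥ (A ^ j) *ᵥ v))
        = C ((-1 : F) ^ j * (φ ⬝ᵥ (A ^ j) *ᵥ v)) * (M.det * X ^ j) := by
      rw [_root_.map_mul, map_pow, map_neg, _root_.map_one]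
      ring_nf
    rw [h3, Polynomial.coeff_C_mul, Polynomial.coeff_mul_X_pow', if_pos hj', hdetM]
    have : k + 1 - 1 - j = k - j := by omega
    rw [this]
    ring_nf
  -- final assembly
  have main : principalMinorSum (A + lam • vecMulVec v φ) (k + 1)
      = (M.det).coeff (k + 1) + (C lam * ((X : F[X]) * p M.adjugate)).coeff (k + 1) := by
    rw [← coeff_det_one_add_X_smul_eq (A + lam • vecMulVec v φ) (k + 1), hmat, hdet, hsum,
      Polynomial.coeff_add]
  have c2 : (C lam * ((X : F[X]) * p M.adjugate)).coeff (k + 1)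
      = lam * (p M.adjugate).coeff k := by
    rw [Polynomial.coeff_C_mul, Polynomial.coeff_X_mul]
  rw [main, hdetM, c2, hpadj, Polynomial.coeff_add, hvanish, add_zero, hcoef]
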